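/- Let a, b, x ∈ ℝⁿ and γ ∈ (0,1), α > 0. Define c entrywise by c_i = median{a_i - (1-γ)α, b_i, a_i + (1-γ)α}. If ‖b - x‖_∞ ≤ γ‖a - x‖_∞ and ‖a - x‖_∞ ≤ α, then ‖c - x‖_∞ ≤ γα. -/
import Mathlib

/-- Entrywise median truncation contraction (Lemma on median trick, second part). -/
theorem stmt_1 (n : ℕ) (a b x : Fin n → ℝ) (γ α : ℝ)
    (hγ : 0 < γ) (hγ1 : γ < 1) (hα : 0 < α)
    (c : Fin n → ℝ)
    (hc : ∀ i, c i = max (a i - (1 - γ) * α) (min (b i) (a i + (1 - γ) * α)))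
    (hb : ‖b - x‖ ≤ γ * ‖a - x‖) (ha : ‖a - x‖ ≤ α) :
    ‖c - x‖ ≤ γ * α := by
  have hγα : 0 ≤ γ * α := by positivity
  rw [pi_norm_le_iff_of_nonneg hγα]
  intro i
  have hai : |a i - x i| ≤ α := by
    have := norm_le_pi_norm (a - x) i
    simp only [Pi.sub_apply, Real.norm_eq_abs] at this
    linarith
  have hbi : |b i - x i| ≤ γ * α := by
    have := norm_le_pi_norm (b - x) i
    simp only [Pi.sub_apply, Real.norm_eq_abs] at this
    nlinarith [hb, ha]
  have h1 := abs_le.mp hai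
  have h2 := abs_le.mp hbi
  rw [Pi.sub_apply, Real.norm_eq_abs, abs_le, hc i]
  constructor
  · rcases le_total (b i) (a i + (1 - γ) * α) with h | h
    · rw [min_eq_left h]
      have := le_max_right (a i - (1 - γ) * α) (b i)
      linarith [h2.1]
    · rw [min_eq_right h]
      have := le_max_right (a i - (1 - γ) * α) (a i + (1 - γ) * α)
      linarith [h1.1]
  · have : max (a i - (1 - γ) * α) (min (b i) (a i + (1 - γ) * α)) ≤ x i + γ * α :=
      max_le (by linarith [h1.2])
        (le_trans (min_le_left _ _) (by linarith [h2.2]))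
    linarith
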